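/- arXiv:2505.12930 — 2 statements merged into one kernel-verified Lean document; each statement's English description precedes it below -/
import Mathlib

section
/- Fix d ≥ 1 and D = {0,…,d}. Let A ∈ ℝ^{m×n} have an elimination ordering. Then A is universally connected: for every b ∈ ℝ^m, the graph on {x ∈ D^n : Ax ≥ b} with edges at Hamming distance 1 is connected. -/
open Matrix Finset
open scoped Classical

/-- `A` has a forbidden pattern: there are `lam ≥ 1` rows and columns, with
orderings (injective enumerations) `r`, `c`, such that in column `c l` all rows
of the pattern other than `r l`, `r (l+1)` vanish (cyclically), and
`A (r l) (c l) * A (r (l+1)) (c l) < 0` for every `l`. -/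
def HasFP {m n : ℕ} (A : Matrix (Fin m) (Fin n) ℝ) : Prop :=
  ∃ lam : ℕ, ∃ r : Fin (lam + 1) → Fin m, ∃ c : Fin (lam + 1) → Fin n,
    Function.Injective r ∧ Function.Injective c ∧
    (∀ l k : Fin (lam + 1), k ≠ l → k ≠ l + 1 → A (r k) (c l) = 0) ∧
    (∀ l : Fin (lam + 1), A (r l) (c l) * A (r (l + 1)) (c l) < 0)

/-- `A`, restricted to the set `S` of remaining columns, can be eliminated at column `j`. -/
def CanElim {m n : ℕ} (A : Matrix (Fin m) (Fin n) ℝ) (S : Finset (Fin n)) (j : Fin n) : Prop :=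
  (∀ i, 0 < A i j → ∀ j' ∈ S, j' ≠ j → A i j' = 0) ∨
  (∀ i, A i j < 0 → ∀ j' ∈ S, j' ≠ j → A i j' = 0)

/-- `A` has an elimination ordering. -/
def HasEO {m n : ℕ} (A : Matrix (Fin m) (Fin n) ℝ) : Prop :=
  ∃ e : Fin n ≃ Fin n, ∀ t : Fin n,
    CanElim A (Finset.univ.filter fun c => ∀ s : Fin n, s < t → e s ≠ c) (e t)

/-- `x ∈ {0,…,d}ⁿ` is a feasible solution of the integer linear system `A x ≥ b`. -/
def Feas {m n : ℕ} (d : ℕ) (A : Matrix (Fin m) (Fin n) ℝ) (b : Fin m → ℝ)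
    (x : Fin n → ℕ) : Prop :=
  (∀ j, x j ≤ d) ∧ ∀ i, b i ≤ ∑ j, A i j * (x j : ℝ)

/-- Adjacency in the solution graph `G(A,b)`: both endpoints are feasible and
their Hamming distance is `1`. -/
def SGAdj {m n : ℕ} (d : ℕ) (A : Matrix (Fin m) (Fin n) ℝ) (b : Fin m → ℝ)
    (x y : Fin n → ℕ) : Prop :=
  Feas d A b x ∧ Feas d A b y ∧ hammingDist x y = 1

/-- The solution graph `G(A,b)` is connected. -/
def SGConn {m n : ℕ} (d : ℕ) (A : Matrix (Fin m) (Fin n) ℝ) (b : Fin m → ℝ) : Prop :=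
  ∀ x y : Fin n → ℕ, Feas d A b x → Feas d A b y →
    Relation.ReflTransGen (SGAdj d A b) x y

/-- `A` is universally connected. -/
def UnivConn {m n : ℕ} (d : ℕ) (A : Matrix (Fin m) (Fin n) ℝ) : Prop :=
  ∀ b : Fin m → ℝ, SGConn d A b

section
variable {m n : ℕ} (d : ℕ) (A : Matrix (Fin m) (Fin n) ℝ) (b : Fin m → ℝ)

lemma sum_update_mul (x : Fin n → ℕ) (j : Fin n) (v : ℕ) (i : Fin m) :
    ∑ j', A i j' * ((Function.update x j v j' : ℕ) : ℝ)
      = (∑ j', A i j' * (x j' : ℝ)) - A i j * (x j : ℝ) + A i j * (v : ℝ) := by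
  have h1 : ∀ g : Fin n → ℕ, ∑ j', A i j' * ((g j' : ℕ) : ℝ)
      = A i j * (g j : ℝ) + ∑ j' ∈ univ.erase j, A i j' * (g j' : ℝ) :=
    fun g => (Finset.add_sum_erase _ _ (mem_univ j)).symm
  rw [h1, h1 x]
  have h2 : ∑ j' ∈ univ.erase j, A i j' * ((Function.update x j v j' : ℕ) : ℝ)
      = ∑ j' ∈ univ.erase j, A i j' * (x j' : ℝ) := by
    refine Finset.sum_congr rfl fun j' hj' => ?_
    rw [Function.update_of_ne (Finset.ne_of_mem_erase hj')]
  rw [h2, Function.update_self]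
  ring

lemma hamming_update (x : Fin n → ℕ) (j : Fin n) (v : ℕ) (hne : v ≠ x j) :
    hammingDist x (Function.update x j v) = 1 := by
  have : (Finset.univ.filter fun i => x i ≠ Function.update x j v i) = {j} := by
    ext i
    simp only [mem_filter, mem_univ, true_and, mem_singleton]
    constructor
    · intro hi
      by_contra hij
      exact hi (by rw [Function.update_of_ne hij])
    · rintro rfl
      rw [Function.update_self]
      exact fun e => hne e.symm
  show (Finset.univ.filter fun i => x i ≠ Function.update x j v i).card = 1
  rw [this, Finset.card_singleton]

lemma sgadj_symm : Symmetric (SGAdj d A b) := by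
  rintro x y ⟨h1, h2, h3⟩
  exact ⟨h2, h1, by rwa [hammingDist_comm]⟩

lemma walk_down (j : Fin n) (μ : ℕ) :
    ∀ k (x : Fin n → ℕ), x j = μ + k →
    (∀ v, μ ≤ v → v ≤ x j → Feas d A b (Function.update x j v)) →
    Relation.ReflTransGen (SGAdj d A b) x (Function.update x j μ) := by
  intro k
  induction k with
  | zero =>
    intro x hx _
    have : Function.update x j μ = x := by
      have h : μ = x j := by omega
      rw [h]; exact Function.update_eq_self j x
    rw [this]
  | succ k ih =>
    intro x hx hf
    set x' := Function.update x j (μ + k) with hx'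
    have hxfeas : Feas d A b x := by
      have := hf (x j) (by omega) le_rfl
      rwa [Function.update_eq_self] at this
    have hx'feas : Feas d A b x' := hf (μ + k) (by omega) (by omega)
    have hadj : SGAdj d A b x x' :=
      ⟨hxfeas, hx'feas, hamming_update x j (μ + k) (by omega)⟩
    have hstep : Relation.ReflTransGen (SGAdj d A b) x' (Function.update x' j μ) := by
      refine ih x' ?_ ?_
      · rw [hx', Function.update_self]
      · intro v hv1 hv2
        rw [hx', Function.update_idem]
        refine hf v hv1 ?_
        rw [hx', Function.update_self] at hv2
        omega
    have heq : Function.update x' j μ = Function.update x j μ := by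
      rw [hx', Function.update_idem]
    rw [heq] at hstep
    exact Relation.ReflTransGen.head hadj hstep

lemma Ceq (S : Finset (Fin n)) (j : Fin n) (i : Fin m)
    (hzero : ∀ j' ∈ S, j' ≠ j → A i j' = 0)
    (u u' : Fin n → ℕ) (hag : ∀ c ∉ S, u c = u' c) :
    (∑ j', A i j' * (u j' : ℝ)) - A i j * (u j : ℝ)
      = (∑ j', A i j' * (u' j' : ℝ)) - A i j * (u' j : ℝ) := by
  have h1 : ∀ g : Fin n → ℕ, (∑ j', A i j' * ((g j' : ℕ) : ℝ)) - A i j * (g j : ℝ)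
      = ∑ j' ∈ univ.erase j, A i j' * (g j' : ℝ) := by
    intro g
    rw [← Finset.add_sum_erase _ (fun j' => A i j' * ((g j' : ℕ) : ℝ)) (mem_univ j)]
    ring
  rw [h1, h1]
  refine Finset.sum_congr rfl fun j' hj' => ?_
  have hj'j : j' ≠ j := Finset.ne_of_mem_erase hj'
  by_cases hS : j' ∈ S
  · rw [hzero j' hS hj'j]; ring
  · rw [hag j' hS]

lemma step_connect (S : Finset (Fin n)) (j : Fin n)
    (hC : CanElim A S j) (x y : Fin n → ℕ) (hx : Feas d A b x) (hy : Feas d A b y)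
    (hag : ∀ c ∉ S, x c = y c) :
    ∃ w, Feas d A b (Function.update x j w) ∧ Feas d A b (Function.update y j w) ∧
      Relation.ReflTransGen (SGAdj d A b) x (Function.update x j w) ∧
      Relation.ReflTransGen (SGAdj d A b) y (Function.update y j w) := by
  rcases hC with hpos | hneg
  · -- positive rows vanish: move both down to the min
    have main : ∀ u u' : Fin n → ℕ, Feas d A b u → Feas d A b u' →
        (∀ c ∉ S, u c = u' c) → ∀ v, min (u j) (u' j) ≤ v → v ≤ u j →
        Feas d A b (Function.update u j v) := by
      intro u u' hu hu' hag' v hv1 hv2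
      constructor
      · intro j''
        by_cases hj : j'' = j
        · subst hj; rw [Function.update_self]; exact le_trans hv2 (hu.1 j'')
        · rw [Function.update_of_ne hj]; exact hu.1 j''
      · intro i
        rw [sum_update_mul]
        by_cases hA : 0 < A i j
        · have hCeq := Ceq A S j i (fun j' h1 h2 => hpos i hA j' h1 h2) u u' hag'
          have hb1 := hu.2 i
          have hb2 := hu'.2 i
          have hmin : b i ≤ ((∑ j', A i j' * (u j' : ℝ)) - A i j * (u j : ℝ))
              + A i j * ((min (u j) (u' j) : ℕ) : ℝ) := by
            rcases le_total (u j) (u' j) with h | h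
            · rw [min_eq_left h]; linarith
            · rw [min_eq_right h]; linarith
          have hc : ((min (u j) (u' j) : ℕ) : ℝ) ≤ (v : ℝ) := Nat.cast_le.mpr hv1
          have := mul_le_mul_of_nonneg_left hc (le_of_lt hA)
          linarith
        · push_neg at hA
          have hc : (v : ℝ) ≤ (u j : ℝ) := Nat.cast_le.mpr hv2
          have := mul_le_mul_of_nonpos_left hc hA
          have hb := hu.2 i
          linarith
    set w := min (x j) (y j) with hw
    have hfx : ∀ v, w ≤ v → v ≤ x j → Feas d A b (Function.update x j v) :=
      main x y hx hy hag
    have hfy : ∀ v, w ≤ v → v ≤ y j → Feas d A b (Function.update y j v) := by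
      intro v hv1 hv2
      refine main y x hy hx (fun c hc => (hag c hc).symm) v ?_ hv2
      rwa [min_comm, ← hw]
    refine ⟨w, hfx w le_rfl (min_le_left _ _), hfy w le_rfl (min_le_right _ _), ?_, ?_⟩
    · exact walk_down d A b j w (x j - w) x
        (by have := min_le_left (x j) (y j); omega) hfx
    · exact walk_down d A b j w (y j - w) y
        (by have := min_le_right (x j) (y j); omega) hfy
  · -- negative rows vanish: move both up to the max
    have main : ∀ u u' : Fin n → ℕ, Feas d A b u → Feas d A b u' →
        (∀ c ∉ S, u c = u' c) → ∀ v, u j ≤ v → v ≤ max (u j) (u' j) →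
        Feas d A b (Function.update u j v) := by
      intro u u' hu hu' hag' v hv1 hv2
      constructor
      · intro j''
        by_cases hj : j'' = j
        · subst hj; rw [Function.update_self]
          exact le_trans hv2 (max_le (hu.1 _) (hu'.1 _))
        · rw [Function.update_of_ne hj]; exact hu.1 j''
      · intro i
        rw [sum_update_mul]
        by_cases hA : A i j < 0
        · have hCeq := Ceq A S j i (fun j' h1 h2 => hneg i hA j' h1 h2) u u' hag'
          have hb1 := hu.2 i
          have hb2 := hu'.2 i
          have hmax : b i ≤ ((∑ j', A i j' * (u j' : ℝ)) - A i j * (u j : ℝ))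
              + A i j * ((max (u j) (u' j) : ℕ) : ℝ) := by
            rcases le_total (u j) (u' j) with h | h
            · rw [max_eq_right h]; linarith
            · rw [max_eq_left h]; linarith
          have hc : (v : ℝ) ≤ ((max (u j) (u' j) : ℕ) : ℝ) := Nat.cast_le.mpr hv2
          have := mul_le_mul_of_nonpos_left hc (le_of_lt hA)
          linarith
        · push_neg at hA
          have hc : (u j : ℝ) ≤ (v : ℝ) := Nat.cast_le.mpr hv1
          have := mul_le_mul_of_nonneg_left hc hA
          have hb := hu.2 i
          linarith
    set w := max (x j) (y j) with hw
    have hfx : ∀ v, x j ≤ v → v ≤ w → Feas d A b (Function.update x j v) :=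
      main x y hx hy hag
    have hfy : ∀ v, y j ≤ v → v ≤ w → Feas d A b (Function.update y j v) := by
      intro v hv1 hv2
      refine main y x hy hx (fun c hc => (hag c hc).symm) v hv1 ?_
      rwa [max_comm, ← hw]
    have upx : Relation.ReflTransGen (SGAdj d A b) x (Function.update x j w) := by
      set x' := Function.update x j w with hx'
      have hdown : ∀ v, x j ≤ v → v ≤ x' j → Feas d A b (Function.update x' j v) := by
        intro v h1 h2
        rw [hx', Function.update_idem]
        refine hfx v h1 ?_
        rwa [hx', Function.update_self] at h2
      have p1 := walk_down d A b j (x j) (w - x j) x'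
        (by rw [hx', Function.update_self]; have := le_max_left (x j) (y j); omega) hdown
      have heq : Function.update x' j (x j) = x := by
        rw [hx', Function.update_idem, Function.update_eq_self]
      rw [heq] at p1
      exact (haveI : Std.Symm (SGAdj d A b) := ⟨fun _ _ h => sgadj_symm d A b h⟩; Relation.ReflTransGen.symmetric.symm _ _ p1)
    have upy : Relation.ReflTransGen (SGAdj d A b) y (Function.update y j w) := by
      set y' := Function.update y j w with hy'
      have hdown : ∀ v, y j ≤ v → v ≤ y' j → Feas d A b (Function.update y' j v) := by
        intro v h1 h2
        rw [hy', Function.update_idem]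
        refine hfy v h1 ?_
        rwa [hy', Function.update_self] at h2
      have p1 := walk_down d A b j (y j) (w - y j) y'
        (by rw [hy', Function.update_self]; have := le_max_right (x j) (y j); omega) hdown
      have heq : Function.update y' j (y j) = y := by
        rw [hy', Function.update_idem, Function.update_eq_self]
      rw [heq] at p1
      exact (haveI : Std.Symm (SGAdj d A b) := ⟨fun _ _ h => sgadj_symm d A b h⟩; Relation.ReflTransGen.symmetric.symm _ _ p1)
    exact ⟨w, hfx w (le_max_left _ _) le_rfl, hfy w (le_max_right _ _) le_rfl, upx, upy⟩

end

theorem eo_univConn {m n : ℕ} (d : ℕ) (A : Matrix (Fin m) (Fin n) ℝ)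
    (h : HasEO A) : ∀ b : Fin m → ℝ, ∀ x y : Fin n → ℕ, Feas d A b x → Feas d A b y →
    Relation.ReflTransGen (SGAdj d A b) x y := by
  obtain ⟨e, he⟩ := h
  intro b
  set St : ℕ → Finset (Fin n) :=
    fun t => Finset.univ.filter fun c => ∀ s : Fin n, (s : ℕ) < t → e s ≠ c with hSt
  have key : ∀ k t, t + k = n → ∀ x y : Fin n → ℕ, Feas d A b x → Feas d A b y →
      (∀ c, c ∉ St t → x c = y c) → Relation.ReflTransGen (SGAdj d A b) x y := by
    intro k
    induction k with
    | zero =>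
      intro t ht x y hx hy hag
      have hxy : x = y := by
        funext c
        refine hag c fun hmem => ?_
        simp only [hSt, mem_filter, mem_univ, true_and] at hmem
        exact hmem (e.symm c) (by have := (e.symm c).isLt; omega) (e.apply_symm_apply c)
      exact hxy ▸ Relation.ReflTransGen.refl
    | succ k ih =>
      intro t ht x y hx hy hag
      have htn : t < n := by omega
      set tf : Fin n := ⟨t, htn⟩ with htf
      set j := e tf with hj
      have hfe : (Finset.univ.filter fun c => ∀ s : Fin n, s < tf → e s ≠ c) = St t := by
        ext c
        simp only [hSt, mem_filter, mem_univ, true_and]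
        constructor
        · intro hc s hs
          exact hc s (by rw [Fin.lt_def]; exact hs)
        · intro hc s hs
          exact hc s (by rw [Fin.lt_def] at hs; exact hs)
      have hC : CanElim A (St t) j := by
        have := he tf
        rwa [hfe] at this
      obtain ⟨w, hfx', hfy', px, py⟩ := step_connect d A b (St t) j hC x y hx hy hag
      have hag' : ∀ c, c ∉ St (t + 1) →
          Function.update x j w c = Function.update y j w c := by
        intro c hc
        by_cases hcj : c = j
        · subst hcj
          rw [Function.update_self, Function.update_self]
        · rw [Function.update_of_ne hcj, Function.update_of_ne hcj]
          refine hag c ?_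
          simp only [hSt, mem_filter, mem_univ, true_and, not_forall] at hc ⊢
          obtain ⟨s, hs⟩ := hc
          push_neg at hs
          obtain ⟨hs1, hs2⟩ := hs
          refine ⟨s, ?_, fun h => h hs2⟩
          rcases Nat.lt_or_ge (s : ℕ) t with h' | h'
          · exact h'
          · exfalso
            have : (s : ℕ) = t := by omega
            have hstf : s = tf := Fin.ext this
            rw [hstf] at hs2
            exact hcj hs2.symm
      have ppath := ih (t + 1) (by omega) _ _ hfx' hfy' hag'
      exact px.trans (ppath.trans ((haveI : Std.Symm (SGAdj d A b) := ⟨fun _ _ h => sgadj_symm d A b h⟩; Relation.ReflTransGen.symmetric.symm _ _ py)))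
  intro x y hx hy
  refine key n 0 (by omega) x y hx hy fun c hc => absurd ?_ hc
  simp only [hSt, mem_filter, mem_univ, true_and]
  intro s hs
  omega


theorem stmt17 {m n : ℕ} (d : ℕ) (hd : 1 ≤ d) (A : Matrix (Fin m) (Fin n) ℝ)
    (h : HasEO A) : UnivConn d A :=
  fun b x y hx hy => eo_univConn d A h b x y hx hy
end

section
/- Let A ∈ ℝ^{2×2} with all four entries nonzero and a_{11}·a_{21} < 0, a_{12}·a_{22} < 0 (a forbidden pattern of size 2). Fix d ≥ 1, D = {0,…,d}. Then A is not universally connected: there exists b ∈ ℝ^2 such that the graph on {x ∈ D^2 : Ax ≥ b} with edges at Hamming distance 1 is disconnected. -/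
open Matrix Finset
open scoped Classical

lemma ham2 (x y : Fin 2 → ℕ) (h : hammingDist x y = 1) :
    (x 0 = y 0 ∧ x 1 ≠ y 1) ∨ (x 0 ≠ y 0 ∧ x 1 = y 1) := by
  by_cases h0 : x 0 = y 0 <;> by_cases h1 : x 1 = y 1 <;>
    simp only [hammingDist, show (Finset.univ : Finset (Fin 2)) = {0, 1} by decide,
      Finset.filter_insert, Finset.filter_singleton] at h <;>
    simp_all

lemma isolated_notconn {d : ℕ} (A : Matrix (Fin 2) (Fin 2) ℝ) (b : Fin 2 → ℝ)
    (p q : Fin 2 → ℕ) (hp : Feas d A b p) (hq : Feas d A b q) (hne : p ≠ q)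
    (hiso : ∀ z, Feas d A b z → hammingDist p z ≠ 1) : ¬ SGConn d A b := by
  intro h
  rcases (h p q hp hq).cases_head with h1 | ⟨z, hz, _⟩
  · exact hne h1
  · exact hiso z hz.2.1 hz.2.2

lemma core (d : ℕ) (hd : 1 ≤ d) (A : Matrix (Fin 2) (Fin 2) ℝ)
    (ha : 0 < A 0 0) (hb : 0 < A 0 1) (he : A 1 0 < 0) (hf : A 1 1 < 0) :
    ∃ b, ¬ SGConn d A b := by
  refine ⟨![min (A 0 0) (A 0 1), min (A 1 0) (A 1 1)], ?_⟩
  have hfeas : ∀ u v : ℕ, u ≤ d → v ≤ d →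
      min (A 0 0) (A 0 1) ≤ A 0 0 * u + A 0 1 * v →
      min (A 1 0) (A 1 1) ≤ A 1 0 * u + A 1 1 * v →
      Feas d A ![min (A 0 0) (A 0 1), min (A 1 0) (A 1 1)] ![u, v] := by
    intro u v hu hv r0 r1
    refine ⟨fun j => by fin_cases j <;> simpa, fun i => by
      fin_cases i <;>
        simp only [Fin.sum_univ_two, Matrix.cons_val_zero, Matrix.cons_val_one,
          Matrix.head_cons, Fin.isValue] <;> assumption⟩
  have key : ∀ z : Fin 2 → ℕ,
      Feas d A ![min (A 0 0) (A 0 1), min (A 1 0) (A 1 1)] z →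
      (min (A 0 0) (A 0 1) ≤ A 0 0 * z 0 + A 0 1 * z 1) ∧
      (min (A 1 0) (A 1 1) ≤ A 1 0 * z 0 + A 1 1 * z 1) := by
    intro z ⟨_, hzf⟩
    have h0 := hzf 0; have h1 := hzf 1
    simp only [Fin.sum_univ_two, Matrix.cons_val_zero, Matrix.cons_val_one,
      Matrix.head_cons, Fin.isValue] at h0 h1
    exact ⟨h0, h1⟩
  rcases le_total (A 1 1) (A 1 0) with hcmp | hcmp
  · -- p = (0,1) isolated
    apply isolated_notconn A _ ![0, 1] ![1, 0]
    · refine hfeas 0 1 (by omega) hd ?_ ?_ <;> push_cast <;>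
        simpa using min_le_right _ _
    · refine hfeas 1 0 hd (by omega) ?_ ?_ <;> push_cast <;>
        simpa using min_le_left _ _
    · intro h; have := congrFun h 0; simp at this
    · intro z hz hham
      obtain ⟨hr0, hr1⟩ := key z hz
      have hmin0 : 0 < min (A 0 0) (A 0 1) := lt_min ha hb
      have hmin1 : min (A 1 0) (A 1 1) = A 1 1 := min_eq_right hcmp
      rcases ham2 _ _ hham with ⟨e0, e1⟩ | ⟨e0, e1⟩ <;>
        simp only [Matrix.cons_val_zero, Matrix.cons_val_one, Matrix.head_cons] at e0 e1
      · have hz0 : z 0 = 0 := e0.symm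
        rcases Nat.lt_or_ge (z 1) 2 with hlt | hge
        · have : z 1 = 0 := by omega
          rw [hz0, this] at hr0; push_cast at hr0; linarith
        · have h2 : (2:ℝ) ≤ (z 1 : ℝ) := by exact_mod_cast hge
          rw [hz0] at hr1; rw [hmin1] at hr1; push_cast at hr1; nlinarith
      · have hz1 : z 1 = 1 := e1.symm
        have h1 : (1:ℝ) ≤ (z 0 : ℝ) := by
          have : 1 ≤ z 0 := by omega
          exact_mod_cast this
        rw [hz1] at hr1; rw [hmin1] at hr1; push_cast at hr1; nlinarith
  · -- p = (1,0) isolated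
    apply isolated_notconn A _ ![1, 0] ![0, 1]
    · refine hfeas 1 0 hd (by omega) ?_ ?_ <;> push_cast <;>
        simpa using min_le_left _ _
    · refine hfeas 0 1 (by omega) hd ?_ ?_ <;> push_cast <;>
        simpa using min_le_right _ _
    · intro h; have := congrFun h 0; simp at this
    · intro z hz hham
      obtain ⟨hr0, hr1⟩ := key z hz
      have hmin0 : 0 < min (A 0 0) (A 0 1) := lt_min ha hb
      have hmin1 : min (A 1 0) (A 1 1) = A 1 0 := min_eq_left hcmp
      rcases ham2 _ _ hham with ⟨e0, e1⟩ | ⟨e0, e1⟩ <;>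
        simp only [Matrix.cons_val_zero, Matrix.cons_val_one, Matrix.head_cons] at e0 e1
      · have hz0 : z 0 = 1 := e0.symm
        have h1 : (1:ℝ) ≤ (z 1 : ℝ) := by
          have : 1 ≤ z 1 := by omega
          exact_mod_cast this
        rw [hz0] at hr1; rw [hmin1] at hr1; push_cast at hr1; nlinarith
      · have hz1 : z 1 = 0 := e1.symm
        rcases Nat.lt_or_ge (z 0) 2 with hlt | hge
        · have : z 0 = 0 := by omega
          rw [hz1, this] at hr0; push_cast at hr0; linarith
        · have h2 : (2:ℝ) ≤ (z 0 : ℝ) := by exact_mod_cast hge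
          rw [hz1] at hr1; rw [hmin1] at hr1; push_cast at hr1; nlinarith

lemma flipLem (d : ℕ) (n : ℕ) (A : Matrix (Fin 2) (Fin n) ℝ) (j0 : Fin n) (b' : Fin 2 → ℝ)
    (h : ¬ SGConn d (Matrix.of fun i j => if j = j0 then -A i j else A i j) b') :
    ¬ SGConn d A (fun i => b' i + A i j0 * d) := by
  set A' : Matrix (Fin 2) (Fin n) ℝ := Matrix.of fun i j => if j = j0 then -A i j else A i j
    with hA'
  set b : Fin 2 → ℝ := fun i => b' i + A i j0 * d with hbdef
  set φ : (Fin n → ℕ) → (Fin n → ℕ) := fun x j => if j = j0 then d - x j else x j with hφ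
  have hsum : ∀ (x : Fin n → ℕ), x j0 ≤ d → ∀ i,
      (∑ j, A i j * ((φ x j : ℕ) : ℝ)) = (∑ j, A' i j * (x j : ℝ)) + A i j0 * d := by
    intro x hx i
    have : ∀ j, A i j * ((φ x j : ℕ) : ℝ) =
        A' i j * (x j : ℝ) + (if j = j0 then A i j0 * d else 0) := by
      intro j
      by_cases hj : j = j0
      · subst hj
        simp only [hφ, hA', Matrix.of_apply, if_pos rfl]
        rw [Nat.cast_sub hx]
        push_cast
        ring
      · simp [hφ, hA', hj]
    rw [Finset.sum_congr rfl fun j _ => this j, Finset.sum_add_distrib]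
    simp
  have hF1 : ∀ x, Feas d A' b' x → Feas d A b (φ x) := by
    rintro x ⟨hxd, hxf⟩
    constructor
    · intro j; by_cases hj : j = j0
      · simp [hφ, hj, Nat.sub_le]
      · simpa [hφ, hj] using hxd j
    · intro i
      rw [hsum x (hxd j0) i]
      have := hxf i
      simp only [hbdef]
      linarith
  have hF2 : ∀ y, Feas d A b y → Feas d A' b' (φ y) := by
    rintro y ⟨hyd, hyf⟩
    constructor
    · intro j; by_cases hj : j = j0
      · simp [hφ, hj, Nat.sub_le]
      · simpa [hφ, hj] using hyd j
    · intro i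
      have hcomp : φ (φ y) = y := by
        funext j; by_cases hj : j = j0
        · subst hj; simp only [hφ, if_pos rfl, if_true]; have := hyd j; omega
        · simp [hφ, hj]
      have := hsum (φ y) (by simp [hφ, Nat.sub_le]) i
      rw [hcomp] at this
      have h2 := hyf i
      simp only [hbdef] at h2
      linarith
  have hham : ∀ x y : Fin n → ℕ, x j0 ≤ d → y j0 ≤ d →
      hammingDist (φ x) (φ y) = hammingDist x y := by
    intro x y hx hy
    simp only [hammingDist]
    congr 1
    ext j
    simp only [Finset.mem_filter, Finset.mem_univ, true_and, hφ]
    by_cases hj : j = j0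
    · subst hj; simp only [if_pos rfl, if_true, ne_eq]
      have h1 := hx; have h2 := hy; omega
    · simp [hφ, hj]
  intro hconn
  apply h
  intro x y hx hy
  have hR := hconn (φ x) (φ y) (hF1 x hx) (hF1 y hy)
  have hcompx : φ (φ x) = x := by
    funext j; by_cases hj : j = j0
    · subst hj; simp only [hφ, if_pos rfl, if_true]; have := hx.1 j; omega
    · simp [hφ, hj]
  have hcompy : φ (φ y) = y := by
    funext j; by_cases hj : j = j0
    · subst hj; simp only [hφ, if_pos rfl, if_true]; have := hy.1 j; omega
    · simp [hφ, hj]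
  have hlift : ∀ u v, SGAdj d A b u v → SGAdj d A' b' (φ u) (φ v) := by
    rintro u v ⟨hu, hv, hd1⟩
    exact ⟨hF2 u hu, hF2 v hv, by rw [hham u v (hu.1 j0) (hv.1 j0)]; exact hd1⟩
  have : Relation.ReflTransGen (SGAdj d A' b') (φ (φ x)) (φ (φ y)) :=
    Relation.ReflTransGen.lift φ hlift _ _ hR
  rwa [hcompx, hcompy] at this

theorem stmt18 (d : ℕ) (hd : 1 ≤ d) (A : Matrix (Fin 2) (Fin 2) ℝ)
    (h0 : ∀ i j : Fin 2, A i j ≠ 0)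
    (h1 : A 0 0 * A 1 0 < 0) (h2 : A 0 1 * A 1 1 < 0) :
    ∃ b : Fin 2 → ℝ, ¬ SGConn d A b := by
  rcases lt_or_gt_of_ne (h0 0 0) with ha | ha <;> rcases lt_or_gt_of_ne (h0 0 1) with hb | hb
  · -- A00 < 0, A01 < 0 ⇒ A10 > 0, A11 > 0 : flip both columns
    have he : 0 < A 1 0 := by nlinarith
    have hf : 0 < A 1 1 := by nlinarith
    set A' : Matrix (Fin 2) (Fin 2) ℝ :=
      Matrix.of fun i j => if j = (0 : Fin 2) then -A i j else A i j with hA'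
    obtain ⟨b'', hb''⟩ := core d hd
      (Matrix.of fun i j => if j = (1 : Fin 2) then -A' i j else A' i j)
      (by simp [hA']; linarith) (by simp [hA']; linarith)
      (by simp [hA']; linarith) (by simp [hA']; linarith)
    have step1 := flipLem d 2 A' 1 b'' hb''
    exact ⟨_, flipLem d 2 A 0 _ step1⟩
  · -- A00 < 0, A01 > 0 : flip column 0
    have he : 0 < A 1 0 := by nlinarith
    have hf : A 1 1 < 0 := by nlinarith
    obtain ⟨b', hb'⟩ := core d hd
      (Matrix.of fun i j => if j = (0 : Fin 2) then -A i j else A i j)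
      (by simp; linarith) (by simp; linarith) (by simp; linarith) (by simp; linarith)
    exact ⟨_, flipLem d 2 A 0 b' hb'⟩
  · -- A00 > 0, A01 < 0 : flip column 1
    have he : A 1 0 < 0 := by nlinarith
    have hf : 0 < A 1 1 := by nlinarith
    obtain ⟨b', hb'⟩ := core d hd
      (Matrix.of fun i j => if j = (1 : Fin 2) then -A i j else A i j)
      (by simp; linarith) (by simp; linarith) (by simp; linarith) (by simp; linarith)
    exact ⟨_, flipLem d 2 A 1 b' hb'⟩
  · -- all as needed
    have he : A 1 0 < 0 := by nlinarith
    have hf : A 1 1 < 0 := by nlinarith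
    exact core d hd A ha hb he hf
end
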